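/- Let D be a domain in the complex plane, let a_1, …, a_n be finitely many distinguished points of D, and let φ and ψ be complex-valued functions on D that are integrable with respect to two-dimensional Lebesgue measure, holomorphic on D \ {a_1, …, a_n}, nowhere zero on D \ {a_1, …, a_n}, and meromorphic at each a_j with order at least −1 (i.e. at worst a simple pole). For real t set h(t) = ∬_D |φ(z) + t ψ(z)| dx dy. Then h is differentiable at every real t in some neighborhood of 0, and h′(0) = Re ∬_D ψ(z) · (conj(φ(z))/|φ(z)|) dx dy. -/

import Mathlib

open MeasureTheory Topology Filter

section Aux
open Set Metric

lemma absDeriv (A B : ℂ) (t₀ : ℝ) (h : A + t₀ * B ≠ 0) :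
    HasDerivAt (fun t : ℝ => ‖A + t * B‖)
      ((B * (starRingEnd ℂ) (A + t₀ * B) / (‖A + t₀ * B‖ : ℂ)).re) t₀ := by
  have habs : (0:ℝ) < ‖A + t₀ * B‖ := norm_pos_iff.mpr h
  have hP : ∀ t : ℝ, ‖A + t * B‖
      = Real.sqrt (Complex.normSq A + 2 * (A * (starRingEnd ℂ) B).re * t + Complex.normSq B * t ^ 2) := by
    intro t
    rw [Complex.norm_def]
    congr 1
    rw [Complex.normSq_add]
    simp [Complex.normSq_mul, Complex.normSq_ofReal, map_mul, Complex.conj_ofReal]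
    ring_nf
  have hP0 : Complex.normSq A + 2 * (A * (starRingEnd ℂ) B).re * t₀ + Complex.normSq B * t₀ ^ 2
      = Complex.normSq (A + t₀ * B) := by
    rw [Complex.normSq_add]
    simp [Complex.normSq_mul, Complex.normSq_ofReal, map_mul, Complex.conj_ofReal]
    ring_nf
  have hpoly : HasDerivAt (fun t : ℝ => Complex.normSq A + 2 * (A * (starRingEnd ℂ) B).re * t + Complex.normSq B * t ^ 2)
      (2 * (A * (starRingEnd ℂ) B).re + Complex.normSq B * (2 * t₀)) t₀ := by
    have h1 := ((hasDerivAt_id t₀).const_mul (2 * (A * (starRingEnd ℂ) B).re)).const_add (Complex.normSq A)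
    have h2 := (hasDerivAt_pow 2 t₀).const_mul (Complex.normSq B)
    exact (h1.add h2).congr_deriv (by simp)
  have hne : Complex.normSq A + 2 * (A * (starRingEnd ℂ) B).re * t₀ + Complex.normSq B * t₀ ^ 2 ≠ 0 := by
    rw [hP0]; exact Complex.normSq_pos.2 h |>.ne'
  have := (Real.hasDerivAt_sqrt hne).comp t₀ hpoly
  rw [funext hP]
  refine this.congr_deriv ?_
  symm
  have hsq : Real.sqrt (Complex.normSq A + 2 * (A * (starRingEnd ℂ) B).re * t₀ + Complex.normSq B * t₀ ^ 2)
      = ‖A + t₀ * B‖ := by rw [hP0, Complex.norm_def]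
  rw [hsq]
  have hre : (B * (starRingEnd ℂ) (A + t₀ * B) / (‖A + t₀ * B‖ : ℂ)).re
      = (B * (starRingEnd ℂ) (A + t₀ * B)).re / ‖A + t₀ * B‖ := by
    rw [Complex.div_ofReal_re]
  rw [hre]
  have hnum : (B * (starRingEnd ℂ) (A + t₀ * B)).re
      = (A * (starRingEnd ℂ) B).re + t₀ * Complex.normSq B := by
    simp [Complex.mul_re, Complex.normSq_apply, map_mul, Complex.conj_ofReal]
    ring
  rw [hnum]
  field_simp

lemma countable_of_isolated' {Z : Set ℂ}
    (h : ∀ x ∈ Z, ∃ U, IsOpen U ∧ x ∈ U ∧ U ∩ Z ⊆ {x}) : Z.Countable := by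
  have key : ∀ x : Z, ∃ B ∈ TopologicalSpace.countableBasis ℂ,
      (x : ℂ) ∈ B ∧ B ∩ Z ⊆ {(x : ℂ)} := by
    rintro ⟨x, hx⟩
    obtain ⟨U, hUo, hxU, hUZ⟩ := h x hx
    obtain ⟨B, hB, hxB, hBU⟩ :=
      (TopologicalSpace.isBasis_countableBasis ℂ).exists_subset_of_mem_open hxU hUo
    exact ⟨B, hB, hxB, fun y hy => hUZ ⟨hBU hy.1, hy.2⟩⟩
  choose f hf1 hf2 hf3 using key
  haveI : Countable (TopologicalSpace.countableBasis ℂ) :=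
    (TopologicalSpace.countable_countableBasis ℂ).to_subtype
  have hinj : Function.Injective (fun x : Z => (⟨f x, hf1 x⟩ : TopologicalSpace.countableBasis ℂ)) := by
    intro x y hxy
    simp only [Subtype.mk.injEq] at hxy
    have : (x : ℂ) ∈ f y ∩ Z := ⟨hxy ▸ hf2 x, x.2⟩
    have := hf3 y this
    exact Subtype.ext this
  rw [← Set.countable_coe_iff]
  exact Function.Injective.countable hinj

lemma punctured_ball_preconnected (x : ℂ) (r : ℝ) (hr : 0 < r) :
    IsPreconnected (Metric.ball x r \ {x}) := by
  have hrank : 1 < Module.rank ℝ ℂ := Complex.rank_real_complex ▸ Nat.one_lt_ofNat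
  set Sph := Metric.sphere x (r / 2) with hSph
  have hSph_pre : IsPreconnected Sph :=
    (isPathConnected_sphere hrank x (by linarith)).isConnected.isPreconnected
  have hSph_sub : Sph ⊆ Metric.ball x r \ {x} := by
    intro y hy
    have hd : dist y x = r / 2 := hy
    constructor
    · exact mem_ball.2 (by rw [hd]; linarith)
    · simp only [mem_singleton_iff]
      intro hxy; rw [hxy] at hd; simp at hd; linarith
  have hy₀ : (x + (r / 2 : ℝ)) ∈ Sph := by
    simp [hSph, Metric.mem_sphere, Complex.dist_eq]
    linarith
  set A : ℂ → Set ℂ := fun y => ((fun t : ℝ => x + t • (y - x)) '' Set.Ioo (0:ℝ) 2) ∪ Sph with hA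
  have hray_pre : ∀ y ∈ Sph, IsPreconnected ((fun t : ℝ => x + t • (y - x)) '' Set.Ioo (0:ℝ) 2) := by
    intro y _
    exact (isPreconnected_Ioo).image _ (Continuous.continuousOn (by fun_prop))
  have hA_pre : ∀ y ∈ Sph, IsPreconnected (A y) := by
    intro y hy
    apply IsPreconnected.union y
    · exact ⟨1, by norm_num, by simp⟩
    · exact hy
    · exact hray_pre y hy
    · exact hSph_pre
  have hA_sub : ∀ y ∈ Sph, A y ⊆ Metric.ball x r \ {x} := by
    intro y hy
    apply Set.union_subset _ hSph_sub
    rintro z ⟨t, ⟨ht0, ht2⟩, rfl⟩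
    have hd : dist (x + t • (y - x)) x = t * (r / 2) := by
      rw [dist_eq_norm]
      simp only [add_sub_cancel_left]
      rw [norm_smul, Real.norm_eq_abs, abs_of_pos ht0]
      have : ‖y - x‖ = r / 2 := by
        have : dist y x = r / 2 := hy
        rwa [dist_eq_norm] at this
      rw [this]
    constructor
    · exact mem_ball.2 (by rw [hd]; nlinarith)
    · simp only [mem_singleton_iff]
      intro hz
      rw [hz, dist_self] at hd
      nlinarith
  have hcover : Metric.ball x r \ {x} = ⋃₀ (A '' Sph) := by
    apply Set.Subset.antisymm
    · rintro z ⟨hzball, hzx⟩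
      have hzx' : z ≠ x := hzx
      set d := dist z x with hd
      have hd0 : 0 < d := dist_pos.2 hzx'
      have hdr : d < r := mem_ball.1 hzball
      set y := x + ((r / 2) / d) • (z - x) with hy
      have hymem : y ∈ Sph := by
        simp only [hSph, Metric.mem_sphere, hy]
        rw [dist_eq_norm]
        simp only [add_sub_cancel_left]
        rw [norm_smul, Real.norm_eq_abs, abs_of_pos (by positivity)]
        rw [← dist_eq_norm, ← hd]
        field_simp
      refine ⟨A y, ⟨y, hymem, rfl⟩, Or.inl ⟨d / (r / 2), ⟨by positivity, by rw [div_lt_iff₀ (by linarith : (0:ℝ) < r/2)]; linarith⟩, ?_⟩⟩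
      rw [hy]
      simp only [add_sub_cancel_left]
      rw [smul_smul]
      rw [show d / (r / 2) * (r / 2 / d) = 1 by field_simp]
      simp
    · rintro z ⟨s, ⟨y, hy, rfl⟩, hz⟩
      exact hA_sub y hy hz
  rw [hcover]
  apply isPreconnected_sUnion (x + (r / 2 : ℝ))
  · rintro s ⟨y, hy, rfl⟩
    exact Or.inr hy₀
  · rintro s ⟨y, hy, rfl⟩
    exact hA_pre y hy

lemma helper_remove {U : Set ℂ} (hc : IsPreconnected U) {x : ℂ} {r : ℝ} (hr : 0 < r)
    (hball : Metric.ball x r ⊆ U) {v w : Set ℂ} (hv : IsOpen v) (hw : IsOpen w)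
    (hsub : U \ {x} ⊆ v ∪ w) (hPv : Metric.ball x r \ {x} ⊆ v)
    (hpv : ((U \ {x}) ∩ v).Nonempty) (hqw : ((U \ {x}) ∩ w).Nonempty) :
    ((U \ {x}) ∩ (v ∩ w)).Nonempty := by
  have hcover : U ⊆ (v ∪ Metric.ball x r) ∪ w := by
    intro u hu
    by_cases hux : u = x
    · exact Or.inl (Or.inr (hux ▸ Metric.mem_ball_self hr))
    · rcases hsub ⟨hu, hux⟩ with h | h
      · exact Or.inl (Or.inl h)
      · exact Or.inr h
  obtain ⟨z, hzU, hzvb, hzw⟩ := hc (v ∪ Metric.ball x r) w (hv.union Metric.isOpen_ball) hw hcover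
    ⟨hpv.choose, hpv.choose_spec.1.1, Or.inl hpv.choose_spec.2⟩
    ⟨hqw.choose, hqw.choose_spec.1.1, hqw.choose_spec.2⟩
  by_cases hzx : z = x
  · -- z = x ∈ w; find nearby point of the punctured ball inside w
    subst hzx
    obtain ⟨r', hr', hball'⟩ := Metric.isOpen_iff.1 hw z hzw
    set s := min r r' / 2 with hs
    have hs0 : 0 < s := by positivity
    have hsr : s < r := by
      have := min_le_left r r'; simp only [hs]; linarith [min_le_left r r']
    have hsr' : s < r' := by simp only [hs]; linarith [min_le_right r r']
    set y := z + (s : ℂ) with hy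
    have hdy : dist y z = s := by
      simp [hy, Complex.dist_eq, abs_of_pos hs0]
    have hyP : y ∈ Metric.ball z r \ {z} := by
      refine ⟨Metric.mem_ball.2 (by rw [hdy]; exact hsr), ?_⟩
      simp only [mem_singleton_iff]
      intro hyx
      rw [hyx, dist_self] at hdy
      exact hs0.ne' hdy.symm
    refine ⟨y, ⟨hball hyP.1, hyP.2⟩, hPv hyP, hball' (Metric.mem_ball.2 (by rw [hdy]; exact hsr'))⟩
  · rcases hzvb with hzv | hzb
    · exact ⟨z, ⟨hzU, hzx⟩, hzv, hzw⟩
    · exact ⟨z, ⟨hzU, hzx⟩, hPv ⟨hzb, hzx⟩, hzw⟩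

lemma isPreconnected_remove_point {U : Set ℂ} (hU : IsOpen U) (hc : IsPreconnected U) (x : ℂ) :
    IsPreconnected (U \ {x}) := by
  by_cases hx : x ∈ U
  · obtain ⟨r, hr, hball⟩ := Metric.isOpen_iff.1 hU x hx
    intro v w hv hw hsub hv' hw'
    set P := Metric.ball x r \ {x} with hP
    have hPU : P ⊆ U \ {x} := fun z hz => ⟨hball hz.1, hz.2⟩
    by_cases h1 : (P ∩ v).Nonempty
    · by_cases h2 : (P ∩ w).Nonempty
      · obtain ⟨z, hz⟩ := punctured_ball_preconnected x r hr v w hv hw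
          (fun z hz => hsub (hPU hz)) h1 h2
        exact ⟨z, hPU hz.1, hz.2⟩
      · -- P ⊆ v
        have hPv : P ⊆ v := by
          intro z hz
          rcases hsub (hPU hz) with h | h
          · exact h
          · exact absurd ⟨hz, h⟩ (fun hc => h2 ⟨z, hc⟩)
        exact helper_remove hc hr hball hv hw hsub hPv hv' hw'
    · -- P ⊆ w
      have hPw : P ⊆ w := by
        intro z hz
        rcases hsub (hPU hz) with h | h
        · exact absurd ⟨hz, h⟩ (fun hc => h1 ⟨z, hc⟩)
        · exact h
      have := helper_remove hc hr hball hw hv (by rwa [Set.union_comm]) hPw hw' hv'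
      rwa [Set.inter_comm v w]
  · rw [Set.diff_singleton_eq_self hx]
    exact hc

lemma isPreconnected_remove_finite {U : Set ℂ} (hU : IsOpen U) (hc : IsPreconnected U)
    {A : Set ℂ} (hA : A.Finite) : IsPreconnected (U \ A) := by
  have H : IsPreconnected (U \ A) ∧ IsOpen (U \ A) := by
    refine Set.Finite.induction_on
      (motive := fun A _ => IsPreconnected (U \ A) ∧ IsOpen (U \ A)) A hA ?_ ?_
    · simpa using ⟨hc, hU⟩
    · rintro a s _ _ ⟨ih1, ih2⟩
      have he : U \ insert a s = (U \ s) \ {a} := by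
        ext z; simp [and_assoc, and_comm, not_or]
        tauto
      rw [he]
      exact ⟨isPreconnected_remove_point ih2 ih1 a, ih2.sdiff isClosed_singleton⟩
  exact H.1

lemma zeroset_countable {U : Set ℂ} (hU : IsOpen U) (hUc : IsPreconnected U) {f : ℂ → ℂ}
    (hf : DifferentiableOn ℂ f U) (hne : ¬ Set.EqOn f 0 U) :
    {z | z ∈ U ∧ f z = 0}.Countable := by
  have hfa : AnalyticOnNhd ℂ f U := hf.analyticOnNhd hU
  rcases hfa.eqOn_zero_or_eventually_ne_zero_of_preconnected hUc with h | h
  · exact absurd h hne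
  · rw [Filter.eventually_iff, mem_codiscreteWithin] at h
    apply countable_of_isolated'
    rintro x ⟨hxU, hfx⟩
    have := h x hxU
    rw [disjoint_principal_right] at this
    obtain ⟨V, hV, hxV, hVsub⟩ := mem_nhdsWithin.1 this
    refine ⟨V, hV, hxV, ?_⟩
    rintro y ⟨hyV, hyU, hfy⟩
    by_contra hyx
    have : y ∈ V ∩ {x}ᶜ := ⟨hyV, hyx⟩
    have := hVsub this
    simp only [Set.mem_compl_iff, Set.mem_diff, not_and, not_not] at this
    exact (this hyU) hfy

set_option maxHeartbeats 1000000 in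
lemma keyDeriv (D : Set ℂ) (hD_open : IsOpen D)
    (φ ψ : ℂ → ℂ) (hφ_int : IntegrableOn φ D) (hψ_int : IntegrableOn ψ D)
    (h : ℝ → ℝ) (hh : ∀ t : ℝ, h t = ∫ z in D, ‖φ z + (t : ℂ) * ψ z‖)
    (t₀ : ℝ) (hae : ∀ᵐ z ∂(volume.restrict D), φ z + (t₀ : ℂ) * ψ z ≠ 0) :
    HasDerivAt h (∫ z in D, (ψ z * (starRingEnd ℂ) (φ z + (t₀ : ℂ) * ψ z) /
      (‖φ z + (t₀ : ℂ) * ψ z‖ : ℂ)).re) t₀ := by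
  have hφm := hφ_int.aestronglyMeasurable
  have hψm := hψ_int.aestronglyMeasurable
  have hmeas : ∀ t : ℝ, AEStronglyMeasurable (fun z => ‖φ z + (t : ℂ) * ψ z‖)
      (volume.restrict D) := fun t =>
    continuous_norm.comp_aestronglyMeasurable (hφm.add (hψm.const_mul _))
  have hint : Integrable (fun z => ‖φ z + (t₀ : ℂ) * ψ z‖) (volume.restrict D) := by
    simpa using (hφ_int.add (hψ_int.const_mul (t₀ : ℂ))).norm
  have hF'meas : AEStronglyMeasurable (fun z => (ψ z * (starRingEnd ℂ) (φ z + (t₀ : ℂ) * ψ z) /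
      (‖φ z + (t₀ : ℂ) * ψ z‖ : ℂ)).re) (volume.restrict D) := by
    have hre : (fun z => (ψ z * (starRingEnd ℂ) (φ z + (t₀ : ℂ) * ψ z) /
        (‖φ z + (t₀ : ℂ) * ψ z‖ : ℂ)).re)
        = fun z => (ψ z * (starRingEnd ℂ) (φ z + (t₀ : ℂ) * ψ z)).re /
          ‖φ z + (t₀ : ℂ) * ψ z‖ :=
      funext fun z => Complex.div_ofReal_re _ _
    rw [hre]
    have h1 : AEStronglyMeasurable (fun z => (ψ z * (starRingEnd ℂ) (φ z + (t₀ : ℂ) * ψ z)).re)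
        (volume.restrict D) :=
      Complex.continuous_re.comp_aestronglyMeasurable
        (hψm.mul (RCLike.continuous_conj.comp_aestronglyMeasurable (hφm.add (hψm.const_mul _))))
    have h2 : AEStronglyMeasurable (fun z => ‖φ z + (t₀ : ℂ) * ψ z‖)
        (volume.restrict D) :=
      continuous_norm.comp_aestronglyMeasurable (hφm.add (hψm.const_mul _))
    exact (h1.aemeasurable.div h2.aemeasurable).aestronglyMeasurable
  have hlip : ∀ᵐ z ∂(volume.restrict D), LipschitzOnWith (Real.nnabs (‖ψ z‖))
      (fun t : ℝ => ‖φ z + (t : ℂ) * ψ z‖) (Metric.ball t₀ 1) := by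
    refine Filter.Eventually.of_forall (fun z => ?_)
    apply LipschitzWith.lipschitzOnWith
    apply LipschitzWith.of_dist_le_mul
    intro s t
    have hcoe : ((Real.nnabs (‖ψ z‖) : NNReal) : ℝ) = ‖ψ z‖ := by
      simp [Real.coe_nnabs, abs_of_nonneg (norm_nonneg _)]
    rw [hcoe, Real.dist_eq, Real.dist_eq]
    calc |‖φ z + (s : ℂ) * ψ z‖ - ‖φ z + (t : ℂ) * ψ z‖|
        ≤ ‖(φ z + (s : ℂ) * ψ z) - (φ z + (t : ℂ) * ψ z)‖ :=
          abs_norm_sub_norm_le _ _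
      _ = ‖((s - t : ℝ) : ℂ) * ψ z‖ := by congr 1; push_cast; ring
      _ = |s - t| * ‖ψ z‖ := by
          rw [norm_mul, Complex.norm_real, Real.norm_eq_abs]
      _ = ‖ψ z‖ * |s - t| := mul_comm _ _
  have bound_int : Integrable (fun z => ‖ψ z‖) (volume.restrict D) := by
    simpa using hψ_int.norm
  have hdiff : ∀ᵐ z ∂(volume.restrict D), HasDerivAt (fun t : ℝ => ‖φ z + (t : ℂ) * ψ z‖)
      ((ψ z * (starRingEnd ℂ) (φ z + (t₀ : ℂ) * ψ z) / (‖φ z + (t₀ : ℂ) * ψ z‖ : ℂ)).re) t₀ := by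
    filter_upwards [hae] with z hz
    exact absDeriv (φ z) (ψ z) t₀ hz
  have main := hasDerivAt_integral_of_dominated_loc_of_lip (Metric.ball_mem_nhds t₀ one_pos)
    (Filter.Eventually.of_forall hmeas) hint hF'meas hlip bound_int hdiff
  have hfun : h = fun t : ℝ => ∫ z in D, ‖φ z + (t : ℂ) * ψ z‖ := funext hh
  rw [hfun]
  exact main.2

end Aux

/-- Lemma on differentiability of `h(t) = ∬_D |φ + tψ|`.
`D ⊆ ℂ` is a domain, `a 0, …, a (n-1)` are distinguished points of `D`,
`φ, ψ` are integrable on `D`, holomorphic and nowhere zero on `D \ {a j}`,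
and meromorphic at each `a j` with order at least `-1` (at worst a simple pole).
Then `h(t) = ∬_D |φ(z) + t ψ(z)| dx dy` is differentiable near `t = 0` and
`h′(0) = Re ∬_D ψ(z) (conj φ(z) / |φ(z)|) dx dy`. -/
theorem stmt0
    (D : Set ℂ) (hD_open : IsOpen D) (hD_conn : IsConnected D)
    (n : ℕ) (a : Fin n → ℂ) (ha : ∀ j, a j ∈ D)
    (φ ψ : ℂ → ℂ)
    (hφ_int : IntegrableOn φ D) (hψ_int : IntegrableOn ψ D)
    (hφ_hol : DifferentiableOn ℂ φ (D \ Set.range a))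
    (hψ_hol : DifferentiableOn ℂ ψ (D \ Set.range a))
    (hφ_ne : ∀ z ∈ D \ Set.range a, φ z ≠ 0)
    (hψ_ne : ∀ z ∈ D \ Set.range a, ψ z ≠ 0)
    (hφ_mer : ∀ j : Fin n, ∃ (m : ℤ) (g : ℂ → ℂ), -1 ≤ m ∧ AnalyticAt ℂ g (a j) ∧
      g (a j) ≠ 0 ∧ ∀ᶠ z in 𝓝[≠] (a j), φ z = (z - a j) ^ m * g z)
    (hψ_mer : ∀ j : Fin n, ∃ (m : ℤ) (g : ℂ → ℂ), -1 ≤ m ∧ AnalyticAt ℂ g (a j) ∧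
      g (a j) ≠ 0 ∧ ∀ᶠ z in 𝓝[≠] (a j), ψ z = (z - a j) ^ m * g z)
    (h : ℝ → ℝ) (hh : ∀ t : ℝ, h t = ∫ z in D, ‖φ z + (t : ℂ) * ψ z‖) :
    ∃ ε > (0 : ℝ), (∀ t : ℝ, |t| < ε → DifferentiableAt ℝ h t) ∧
      HasDerivAt h
        ((∫ z in D, ψ z * (starRingEnd ℂ) (φ z) / (‖φ z‖ : ℂ)).re) 0 := by
  classical
  set S : Set ℂ := D \ Set.range a with hSdef
  have hS_open : IsOpen S := hD_open.sdiff (Set.finite_range a).isClosed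
  have hS_pre : IsPreconnected S :=
    isPreconnected_remove_finite hD_open hD_conn.isPreconnected (Set.finite_range a)
  have hS_ne : S.Nonempty := by
    rcases Set.eq_empty_or_nonempty S with hS0 | hSne
    · exfalso
      have hDsub : D ⊆ Set.range a := by
        intro z hz
        by_contra hz'
        exact (Set.eq_empty_iff_forall_notMem.1 hS0 z) ⟨hz, hz'⟩
      have h1 : volume D ≤ volume (Set.range a) := measure_mono hDsub
      have h0 : volume (Set.range a) = 0 := (Set.finite_range a).countable.measure_zero _
      have := hD_open.measure_pos volume hD_conn.nonempty
      rw [h0] at h1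
      exact this.ne' (le_antisymm h1 zero_le)
    · exact hSne
  obtain ⟨z₀, hz₀⟩ := hS_ne
  have hψz₀ : ψ z₀ ≠ 0 := hψ_ne z₀ hz₀
  have hφz₀ : φ z₀ ≠ 0 := hφ_ne z₀ hz₀
  have hDm : MeasurableSet D := hD_open.measurableSet
  -- criterion: if φ + tψ is not identically zero on S, then it is a.e. nonzero on D
  have crit : ∀ t₀ : ℝ, ¬ Set.EqOn (fun z => φ z + (t₀ : ℂ) * ψ z) 0 S →
      (∀ᵐ z ∂(volume.restrict D), φ z + (t₀ : ℂ) * ψ z ≠ 0) := by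
    intro t₀ hnot
    have hdiffOn : DifferentiableOn ℂ (fun z => φ z + (t₀ : ℂ) * ψ z) S :=
      hφ_hol.add (hψ_hol.const_mul _)
    have hcnt : {z | z ∈ S ∧ φ z + (t₀ : ℂ) * ψ z = 0}.Countable :=
      zeroset_countable hS_open hS_pre hdiffOn hnot
    have hZ : volume {z | z ∈ D ∧ φ z + (t₀ : ℂ) * ψ z = 0} = 0 := by
      have hsub : {z | z ∈ D ∧ φ z + (t₀ : ℂ) * ψ z = 0} ⊆
          Set.range a ∪ {z | z ∈ S ∧ φ z + (t₀ : ℂ) * ψ z = 0} := by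
        rintro z ⟨hzD, hz0⟩
        by_cases hza : z ∈ Set.range a
        · exact Or.inl hza
        · exact Or.inr ⟨⟨hzD, hza⟩, hz0⟩
      exact measure_mono_null hsub
        (measure_union_null ((Set.finite_range a).countable.measure_zero _)
          (hcnt.measure_zero _))
    have h2 : ∀ᵐ z ∂(volume.restrict D), z ∉ {z | z ∈ D ∧ φ z + (t₀ : ℂ) * ψ z = 0} :=
      ae_restrict_of_ae (ae_iff.mpr (by simpa using hZ))
    filter_upwards [ae_restrict_mem hDm, h2] with z hz1 hz2
    intro h0
    exact hz2 ⟨hz1, h0⟩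
  have hgood0 : ¬ Set.EqOn (fun z => φ z + ((0 : ℝ) : ℂ) * ψ z) 0 S := by
    intro hEq
    have := hEq hz₀
    simp only [Complex.ofReal_zero, zero_mul, add_zero, Pi.zero_apply] at this
    exact hφz₀ this
  -- uniqueness of a "bad" parameter
  have hbad : ∀ t s : ℝ, Set.EqOn (fun z => φ z + (t : ℂ) * ψ z) 0 S →
      Set.EqOn (fun z => φ z + (s : ℂ) * ψ z) 0 S → t = s := by
    intro t s h1 h2
    have e1 := h1 hz₀
    have e2 := h2 hz₀
    simp only [Pi.zero_apply] at e1 e2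
    have he : (t : ℂ) * ψ z₀ = (s : ℂ) * ψ z₀ := by linear_combination e1 - e2
    exact_mod_cast mul_right_cancel₀ hψz₀ he
  -- the derivative at 0, with the simplified integrand
  have hzero : HasDerivAt h
      ((∫ z in D, ψ z * (starRingEnd ℂ) (φ z) / (‖φ z‖ : ℂ)).re) 0 := by
    have hk := keyDeriv D hD_open φ ψ hφ_int hψ_int h hh 0 (crit 0 hgood0)
    have hs : (fun z => (ψ z * (starRingEnd ℂ) (φ z + ((0 : ℝ) : ℂ) * ψ z) /
        (‖φ z + ((0 : ℝ) : ℂ) * ψ z‖ : ℂ)).re)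
        = fun z => (ψ z * (starRingEnd ℂ) (φ z) / (‖φ z‖ : ℂ)).re := by
      funext z; simp
    rw [hs] at hk
    -- exchange `.re` and the integral
    have hgm : AEStronglyMeasurable
        (fun z => ψ z * (starRingEnd ℂ) (φ z) / (‖φ z‖ : ℂ))
        (volume.restrict D) := by
      have hφm := hφ_int.aestronglyMeasurable
      have hψm := hψ_int.aestronglyMeasurable
      have h1 : AEStronglyMeasurable (fun z => ψ z * (starRingEnd ℂ) (φ z))
          (volume.restrict D) := hψm.mul (RCLike.continuous_conj.comp_aestronglyMeasurable hφm)
      have h2 : AEStronglyMeasurable (fun z => (‖φ z‖ : ℂ))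
          (volume.restrict D) := Complex.continuous_ofReal.comp_aestronglyMeasurable
          (continuous_norm.comp_aestronglyMeasurable hφm)
      exact (h1.aemeasurable.div h2.aemeasurable).aestronglyMeasurable
    have hgint : Integrable (fun z => ψ z * (starRingEnd ℂ) (φ z) / (‖φ z‖ : ℂ))
        (volume.restrict D) := by
      apply Integrable.mono hψ_int.norm hgm
      refine Filter.Eventually.of_forall (fun z => ?_)
      by_cases hz : φ z = 0
      · simp [hz]
      · have habs : ‖φ z‖ ≠ 0 := norm_ne_zero_iff.mpr hz
        rw [norm_div, norm_mul, norm_norm]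
        simp only [Complex.norm_conj, Complex.norm_real, Real.norm_eq_abs,
          abs_of_nonneg (norm_nonneg (φ z))]
        rw [mul_div_assoc, div_self habs, mul_one]
    have hre : (∫ z in D, ψ z * (starRingEnd ℂ) (φ z) / (‖φ z‖ : ℂ)).re
        = ∫ z in D, (ψ z * (starRingEnd ℂ) (φ z) / (‖φ z‖ : ℂ)).re := by
      simpa [RCLike.re_to_complex] using (integral_re hgint).symm
    rw [hre]
    exact hk
  refine ?_
  by_cases hex : ∃ t₁ : ℝ, Set.EqOn (fun z => φ z + (t₁ : ℂ) * ψ z) 0 S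
  · obtain ⟨t₁, ht₁⟩ := hex
    have ht₁0 : t₁ ≠ 0 := by
      intro h0
      rw [h0] at ht₁
      exact hgood0 ht₁
    refine ⟨|t₁|, abs_pos.2 ht₁0, ?_, hzero⟩
    intro t ht
    have hgt : ¬ Set.EqOn (fun z => φ z + (t : ℂ) * ψ z) 0 S := by
      intro hEq
      have := hbad t t₁ hEq ht₁
      rw [this] at ht
      exact lt_irrefl _ ht
    exact (keyDeriv D hD_open φ ψ hφ_int hψ_int h hh t (crit t hgt)).differentiableAt
  · refine ⟨1, one_pos, ?_, hzero⟩
    intro t _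
    have hgt : ¬ Set.EqOn (fun z => φ z + (t : ℂ) * ψ z) 0 S := fun hEq => hex ⟨t, hEq⟩
    exact (keyDeriv D hD_open φ ψ hφ_int hψ_int h hh t (crit t hgt)).differentiableAt
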